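/- Let k be a field of characteristic zero and K a Poisson field over k of transcendence degree 2 with nontrivial Poisson bracket. If x, y ∈ K satisfy {x, y} = 0, then x and y are algebraically dependent over k. -/

import Mathlib

open Polynomial


/-- A Poisson bracket on a commutative algebra `A` over `k`. -/
structure PoissonBracket (k A : Type*) [CommRing k] [CommRing A] [Algebra k A] where
  bracket : A → A → A
  add_left : ∀ a b c : A, bracket (a + b) c = bracket a c + bracket b c
  smul_left : ∀ (r : k) (a b : A), bracket (r • a) b = r • bracket a b
  antisymm : ∀ a b : A, bracket a b = - bracket b a
  leibniz : ∀ a b c : A, bracket a (b * c) = bracket a b * c + bracket a c * b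
  jacobi : ∀ a b c : A,
    bracket a (bracket b c) + bracket b (bracket c a) + bracket c (bracket a b) = 0

theorem key (k K : Type*) [Field k] [CharZero k] [Field K] [Algebra k K]
    (P : PoissonBracket k K) {x y : K} (hxy : AlgebraicIndependent k ![x, y])
    (htr2' : ∀ a b c : K, ¬ AlgebraicIndependent k ![a, b, c])
    (a : K) (hax : P.bracket a x = 0) (hay : P.bracket a y = 0) :
    ∀ t : K, P.bracket a t = 0 := by
  have hadd : ∀ b c : K, P.bracket a (b + c) = P.bracket a b + P.bracket a c := by
    intro b c
    rw [P.antisymm, P.add_left, P.antisymm b, P.antisymm c]; ring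
  have h1 : P.bracket a 1 = 0 := by
    have := P.leibniz a 1 1
    rw [mul_one, mul_one] at this
    exact (left_eq_add.mp this)
  have hsmul : ∀ (r : k) (b : K), P.bracket a (r • b) = r • P.bracket a b := by
    intro r b
    rw [P.antisymm, P.smul_left, P.antisymm b, smul_neg, neg_neg]
  have h0 : P.bracket a 0 = 0 := by
    have := hsmul 0 0; simpa using this
  set S : Subalgebra k K :=
    { carrier := {f : K | P.bracket a f = 0}
      mul_mem' := by
        intro b c hb hc
        simp only [Set.mem_setOf_eq] at *
        rw [P.leibniz, hb, hc]; ring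
      one_mem' := h1
      add_mem' := by
        intro b c hb hc
        simp only [Set.mem_setOf_eq] at *
        rw [hadd, hb, hc, add_zero]
      zero_mem' := h0
      algebraMap_mem' := by
        intro r
        simp only [Set.mem_setOf_eq, Algebra.algebraMap_eq_smul_one]
        rw [hsmul, h1, smul_zero] } with hS
  have hinv : ∀ b ∈ S, b⁻¹ ∈ S := by
    intro b hb
    by_cases hb0 : b = 0
    · simpa [hb0] using h0
    · have h1' := P.leibniz a b b⁻¹
      rw [mul_inv_cancel₀ hb0, h1] at h1'
      have hb' : P.bracket a b = 0 := hb
      rw [hb', zero_mul, zero_add] at h1'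
      have := mul_eq_zero.mp h1'.symm
      rcases this with h | h
      · exact h
      · exact absurd h hb0
  set F : IntermediateField k K := S.toIntermediateField hinv with hF
  have hmem : ∀ f : F, P.bracket a (f : K) = 0 := fun f => f.2
  -- every element of K is algebraic over F
  have halg : ∀ t : K, IsAlgebraic F t := by
    intro t
    have hnt : ¬ AlgebraicIndependent k ![x, y, t] := htr2' x y t
    have htrans : ¬ Transcendental (Algebra.adjoin k (Set.range ![x, y])) t := by
      intro h
      apply hnt
      have hopt := (hxy.option_iff_transcendental t).2 h
      have hcomp := hopt.comp (![some 0, some 1, none] : Fin 3 → Option (Fin 2)) (by decide)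
      convert hcomp using 1
      funext i
      fin_cases i <;> rfl
    rw [Transcendental, not_not] at htrans
    have hle : Algebra.adjoin k (Set.range ![x, y]) ≤ F.toSubalgebra := by
      rw [Algebra.adjoin_le_iff]
      rintro z hz
      simp only [Matrix.range_cons, Matrix.range_empty, Set.union_empty,
        Set.union_singleton, Set.mem_insert_iff, Set.mem_singleton_iff] at hz
      rcases hz with rfl | rfl
      · exact hay
      · exact hax
    exact htrans.tower_top_of_subalgebra_le hle
  haveI : CharZero F := charZero_of_injective_algebraMap (algebraMap k F).injective
  -- the derivation {a, ·} over F
  set D : Derivation F K K :=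
    { toFun := P.bracket a
      map_add' := hadd
      map_smul' := by
        intro r b
        calc P.bracket a (r • b) = P.bracket a ((r : K) * b) := by
              rw [Algebra.smul_def]; rfl
          _ = P.bracket a (r : K) * b + P.bracket a b * (r : K) := P.leibniz a _ b
          _ = (r : K) * P.bracket a b := by rw [hmem r, zero_mul, zero_add, mul_comm]
          _ = _ := by rw [Algebra.smul_def]; rfl
      map_one_eq_zero' := h1
      leibniz' := by
        intro b c
        simp only [LinearMap.coe_mk, AddHom.coe_mk, smul_eq_mul]
        rw [P.leibniz]; ring } with hD
  intro t
  have ht := halg t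
  have hint := ht.isIntegral
  have haev : D ((aeval t) (minpoly F t)) = 0 := by rw [minpoly.aeval]; exact D.map_zero
  rw [Derivation.map_aeval] at haev
  have hsep : (minpoly F t).Separable := (minpoly.irreducible hint).separable
  have hne : (aeval t) (derivative (minpoly F t)) ≠ 0 :=
    hsep.aeval_derivative_ne_zero (minpoly.aeval F t)
  have : D t = 0 := by
    rw [smul_eq_mul] at haev
    exact (mul_eq_zero.mp haev).resolve_left hne
  exact this

/-- let `k` have characteristic zero and let `K` be a Poisson field
over `k` of transcendence degree 2 (there exist two algebraically independent
elements, but no three) with nontrivial Poisson bracket.  If `{x, y} = 0` then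
`x` and `y` are algebraically dependent over `k`. -/
theorem stmt4 (k K : Type*) [Field k] [CharZero k] [Field K] [Algebra k K]
    (P : PoissonBracket k K)
    (htr2 : ∃ a b : K, AlgebraicIndependent k ![a, b])
    (htr2' : ∀ a b c : K, ¬ AlgebraicIndependent k ![a, b, c])
    (hnt : ∃ a b : K, P.bracket a b ≠ 0)
    (x y : K) (hxy : P.bracket x y = 0) :
    ¬ AlgebraicIndependent k ![x, y] := by
  intro h
  haveI : CharZero K := charZero_of_injective_algebraMap (algebraMap k K).injective
  have hself : ∀ a : K, P.bracket a a = 0 := by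
    intro a
    have := P.antisymm a a
    have h2 : P.bracket a a + P.bracket a a = 0 := by linear_combination this
    exact add_self_eq_zero.mp h2
  obtain ⟨a, b, hab⟩ := hnt
  apply hab
  have hX : ∀ t : K, P.bracket x t = 0 := key k K P h htr2' x (hself x) hxy
  have hyx : P.bracket y x = 0 := by rw [P.antisymm, hxy, neg_zero]
  have hY : ∀ t : K, P.bracket y t = 0 := key k K P h htr2' y hyx (hself y)
  have hax : P.bracket a x = 0 := by rw [P.antisymm, hX a, neg_zero]
  have hay : P.bracket a y = 0 := by rw [P.antisymm, hY a, neg_zero]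
  exact key k K P h htr2' a hax hay b
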